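/- Let A ∈ ℝ^{n×n}, B ∈ ℝ^{n×p}, and t₁ > 0. The reachable set of the system ẋ = Ax + Bu from x(0) = 0 at time t₁, namely { ∫₀^{t₁} exp(A(t₁−s))·B·u(s) ds : u : [0, t₁] → ℝ^p continuous }, equals the column space of the controllability matrix 𝒞 of (A, B), which also equals the column space of the controllability Gramian W_c(t₁). -/

import Mathlib

open Matrix intervalIntegral
/-- Controllability matrix of the pair `(A, B)`: the horizontal block concatenation of
`B, A*B, A²*B, …, A^(n-1)*B`, indexed so that entry `(i, (k, j))` is `(A^k * B) i j`. -/
noncomputable def ctrbMat {n p : ℕ} (A : Matrix (Fin n) (Fin n) ℝ)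
    (B : Matrix (Fin n) (Fin p) ℝ) : Matrix (Fin n) (Fin n × Fin p) ℝ :=
  fun i kj => (A ^ (kj.1 : ℕ) * B) i kj.2

/-- Controllability Gramian `W_c(t₁) = ∫₀^{t₁} exp(As) B Bᵀ exp(Aᵀs) ds` (entrywise integral). -/
noncomputable def ctrbGram {n p : ℕ} (A : Matrix (Fin n) (Fin n) ℝ)
    (B : Matrix (Fin n) (Fin p) ℝ) (t₁ : ℝ) : Matrix (Fin n) (Fin n) ℝ :=
  fun i j => ∫ s in (0:ℝ)..t₁,
    (NormedSpace.exp (s • A) * B * Bᵀ * NormedSpace.exp (s • Aᵀ)) i j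

open NormedSpace

namespace CtrlAux

lemma vecMul_smul_right {n q : ℕ} (w : Fin n → ℝ) (c : ℝ) (N : Matrix (Fin n) (Fin q) ℝ) :
    w ᵥ* (c • N) = c • (w ᵥ* N) := by
  ext j
  simp [Matrix.vecMul, dotProduct, Finset.mul_sum, Matrix.smul_apply,
    mul_comm, mul_left_comm]

/-- Every power of `A` lies in the span of `A^0, …, A^(n-1)` (Cayley–Hamilton). -/
lemma pow_mem_span {n : ℕ} (A : Matrix (Fin n) (Fin n) ℝ) (m : ℕ) :
    A ^ m ∈ Submodule.span ℝ (Set.range fun k : Fin n => A ^ (k : ℕ)) := by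
  rcases Nat.eq_zero_or_pos n with hn | hn
  · subst hn
    have : A ^ m = 0 := Subsingleton.elim _ _
    rw [this]; exact Submodule.zero_mem _
  set V := Submodule.span ℝ (Set.range fun k : Fin n => A ^ (k : ℕ)) with hV
  have hgen : ∀ k : ℕ, k < n → A ^ k ∈ V := fun k hk =>
    Submodule.subset_span ⟨⟨k, hk⟩, rfl⟩
  have hchar : A ^ n ∈ V := by
    have h0 := Matrix.aeval_self_charpoly A
    have hdeg : A.charpoly.natDegree = n := by
      simpa using A.charpoly_natDegree_eq_dim
    rw [Polynomial.aeval_eq_sum_range, hdeg, Finset.sum_range_succ] at h0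
    have hc : A.charpoly.coeff n = 1 := by
      have := A.charpoly_monic.coeff_natDegree
      rwa [hdeg] at this
    rw [hc, one_smul] at h0
    have : A ^ n = -∑ i ∈ Finset.range n, A.charpoly.coeff i • A ^ i := by
      rw [eq_neg_iff_add_eq_zero, add_comm]; exact h0
    rw [this]
    exact Submodule.neg_mem _ (Submodule.sum_mem _ fun i hi =>
      Submodule.smul_mem _ _ (hgen i (Finset.mem_range.1 hi)))
  have hmul : ∀ M ∈ V, A * M ∈ V := by
    intro M hM
    induction hM using Submodule.span_induction with
    | mem x hx =>
        obtain ⟨k, rfl⟩ := hx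
        show A * A ^ (k : ℕ) ∈ V
        rcases Nat.lt_or_ge ((k : ℕ) + 1) n with h | h
        · have := hgen _ h
          rwa [pow_succ'] at this
        · have hkn : (k : ℕ) + 1 = n := le_antisymm (Nat.succ_le_of_lt k.2) h
          rw [← pow_succ', hkn]; exact hchar
    | zero => simp
    | add x y _ _ hx hy => simpa [Matrix.mul_add] using Submodule.add_mem V hx hy
    | smul c x _ hx => simpa [Matrix.mul_smul] using Submodule.smul_mem V c hx
  induction m with
  | zero => exact hgen 0 hn
  | succ m ih => rw [pow_succ']; exact hmul _ ih

section normed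
attribute [local instance] Matrix.linftyOpSemiNormedRing Matrix.linftyOpNormedRing
  Matrix.linftyOpNormedAlgebra

lemma matDeriv {n : ℕ} (A : Matrix (Fin n) (Fin n) ℝ) (t : ℝ) :
    HasDerivAt (fun s : ℝ => exp (s • A)) (A * exp (t • A)) t :=
  hasDerivAt_exp_smul_const' A t

lemma expCont {n : ℕ} (A : Matrix (Fin n) (Fin n) ℝ) :
    Continuous (fun s : ℝ => exp (s • A)) :=
  continuous_iff_continuousAt.2 fun t => (matDeriv A t).continuousAt

lemma vecDeriv {n p : ℕ} (A : Matrix (Fin n) (Fin n) ℝ) (B : Matrix (Fin n) (Fin p) ℝ)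
    (w : Fin n → ℝ) (C : Matrix (Fin n) (Fin n) ℝ) (t : ℝ) :
    HasDerivAt (fun s : ℝ => w ᵥ* (C * exp (s • A) * B))
      (w ᵥ* (C * (A * exp (t • A)) * B)) t := by
  let L : Matrix (Fin n) (Fin n) ℝ →ₗ[ℝ] (Fin p → ℝ) :=
    { toFun := fun M => w ᵥ* (C * M * B),
      map_add' := by intro x y; simp [Matrix.mul_add, Matrix.add_mul, Matrix.vecMul_add],
      map_smul' := by
        intro c x
        ext j
        simp [Matrix.mul_smul, Matrix.smul_mul, Matrix.vecMul, dotProduct,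
          Finset.mul_sum, Matrix.smul_apply, mul_comm, mul_left_comm] }
  exact (L.toContinuousLinearMap.hasFDerivAt).comp_hasDerivAt t (matDeriv A t)

lemma vecCont {n p : ℕ} (A : Matrix (Fin n) (Fin n) ℝ) (B : Matrix (Fin n) (Fin p) ℝ)
    (w : Fin n → ℝ) (C : Matrix (Fin n) (Fin n) ℝ) :
    Continuous (fun s : ℝ => w ᵥ* (C * exp (s • A) * B)) :=
  continuous_iff_continuousAt.2 fun t => (vecDeriv A B w C t).continuousAt

lemma exp_mem_span {n : ℕ} (A : Matrix (Fin n) (Fin n) ℝ) (s : ℝ) :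
    exp (s • A) ∈ Submodule.span ℝ (Set.range fun k : Fin n => A ^ (k : ℕ)) := by
  set V := Submodule.span ℝ (Set.range fun k : Fin n => A ^ (k : ℕ)) with hV
  have hclosed : IsClosed (V : Set (Matrix (Fin n) (Fin n) ℝ)) :=
    Submodule.closed_of_finiteDimensional V
  rw [exp_eq_tsum (𝕂 := ℝ)]
  show (∑' k : ℕ, ((k.factorial : ℝ)⁻¹) • (s • A) ^ k) ∈ V
  by_cases h : Summable (fun k : ℕ => ((k.factorial : ℝ)⁻¹) • (s • A) ^ k)
  · refine hclosed.mem_of_tendsto h.hasSum (Filter.Eventually.of_forall fun F => ?_)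
    refine Submodule.sum_mem _ fun k _ => ?_
    rw [smul_pow]
    exact Submodule.smul_mem _ _ (Submodule.smul_mem _ _ (pow_mem_span A k))
  · rw [tsum_eq_zero_of_not_summable h]; exact V.zero_mem

end normed

/-- membership in a subspace of `Fin n → ℝ` can be tested against all `dotProduct`-orthogonal
vectors. -/
lemma mem_iff_dot {n : ℕ} (U : Submodule ℝ (Fin n → ℝ)) (x : Fin n → ℝ) :
    x ∈ U ↔ ∀ w : Fin n → ℝ, (∀ y ∈ U, w ⬝ᵥ y = 0) → w ⬝ᵥ x = 0 := by
  constructor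
  · intro hx w hw; exact hw x hx
  · intro h
    let e : EuclideanSpace ℝ (Fin n) ≃ₗ[ℝ] (Fin n → ℝ) := WithLp.linearEquiv 2 ℝ _
    let U' : Submodule ℝ (EuclideanSpace ℝ (Fin n)) := U.comap (e : EuclideanSpace ℝ (Fin n) →ₗ[ℝ] (Fin n → ℝ))
    have he : ∀ a : EuclideanSpace ℝ (Fin n), e a = WithLp.ofLp a := fun a => rfl
    have hinner : ∀ a b : EuclideanSpace ℝ (Fin n),
        (inner ℝ a b : ℝ) = (e a) ⬝ᵥ (e b) := by
      intro a b
      simp [PiLp.inner_apply, RCLike.inner_apply, dotProduct, he, conj_trivial, mul_comm]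
    have hxU' : e.symm x ∈ U'ᗮᗮ := by
      rw [Submodule.mem_orthogonal]
      intro u hu
      have hu' : ∀ y ∈ U, (e u) ⬝ᵥ y = 0 := by
        intro y hy
        have : e.symm y ∈ U' := by
          show e (e.symm y) ∈ U
          rw [e.apply_symm_apply]; exact hy
        have := (Submodule.mem_orthogonal U' u).1 hu _ this
        rw [hinner] at this
        rw [dotProduct_comm]
        simpa [e.apply_symm_apply] using this
      have := h (e u) hu'
      rw [hinner, e.apply_symm_apply]
      exact this
    rw [Submodule.orthogonal_orthogonal] at hxU'
    have : e (e.symm x) ∈ U := hxU'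
    rwa [e.apply_symm_apply] at this

lemma eqzero_of_integral {t₁ : ℝ} (ht₁ : 0 < t₁) {f : ℝ → ℝ} (hf : Continuous f)
    (h0 : ∀ s, 0 ≤ f s) (hint : (∫ s in (0:ℝ)..t₁, f s) = 0) :
    ∀ s ∈ Set.Icc (0:ℝ) t₁, f s = 0 := by
  by_contra hcon
  push_neg at hcon
  obtain ⟨s₀, hs₀, hne⟩ := hcon
  have : 0 < ∫ s in (0:ℝ)..t₁, f s :=
    intervalIntegral.integral_pos ht₁ hf.continuousOn (fun x _ => h0 x)
      ⟨s₀, hs₀, (h0 s₀).lt_of_ne (Ne.symm hne)⟩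
  linarith

end CtrlAux

open CtrlAux

/-- The reachable set of `ẋ = Ax + Bu` from `x(0) = 0` at time `t₁ > 0` (over
continuous controls) equals the column space of the controllability matrix `𝒞`,
which also equals the column space of the controllability Gramian `W_c(t₁)`. -/
theorem reachable_set_eq_ctrb_columnspace {n p : ℕ}
    (A : Matrix (Fin n) (Fin n) ℝ) (B : Matrix (Fin n) (Fin p) ℝ)
    (t₁ : ℝ) (ht₁ : 0 < t₁) :
    ({ x : Fin n → ℝ | ∃ u : ℝ → Fin p → ℝ, Continuous u ∧
        x = fun i => ∫ s in (0:ℝ)..t₁,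
          (NormedSpace.exp ((t₁ - s) • A) * B).mulVec (u s) i } =
      { y : Fin n → ℝ | ∃ v : Fin n × Fin p → ℝ, (ctrbMat A B).mulVec v = y }) ∧
    ({ y : Fin n → ℝ | ∃ v : Fin n × Fin p → ℝ, (ctrbMat A B).mulVec v = y } =
      { y : Fin n → ℝ | ∃ w : Fin n → ℝ, (ctrbGram A B t₁).mulVec w = y }) := by
  classical
  set W := ctrbGram A B t₁ with hWdef
  -- abbreviations
  set m : ℝ → Matrix (Fin n) (Fin p) ℝ := fun s => exp (s • A) * B with hm
  set E : ℝ → Matrix (Fin n) (Fin n) ℝ :=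
    fun s => exp (s • A) * B * Bᵀ * exp (s • Aᵀ) with hE
  -- basic exp facts
  have htr : ∀ s : ℝ, exp (s • Aᵀ) = (exp (s • A))ᵀ := by
    intro s
    rw [← Matrix.transpose_smul, Matrix.exp_transpose]
  have hmT : ∀ s : ℝ, (m s)ᵀ = Bᵀ * exp (s • Aᵀ) := by
    intro s
    rw [hm, Matrix.transpose_mul, htr]
  have hEm : ∀ s : ℝ, E s = m s * (m s)ᵀ := by
    intro s
    rw [hmT]
    show exp (s • A) * B * Bᵀ * exp (s • Aᵀ)
      = exp (s • A) * B * (Bᵀ * exp (s • Aᵀ))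
    rw [Matrix.mul_assoc]
  -- continuity
  have hmCont : Continuous m := (expCont A).matrix_mul continuous_const
  have hECont : Continuous E :=
    ((((expCont A).matrix_mul continuous_const).matrix_mul
      continuous_const).matrix_mul (expCont Aᵀ))
  have hcCont : ∀ w : Fin n → ℝ, Continuous (fun s : ℝ => w ᵥ* m s) := by
    intro w
    simpa [hm, Matrix.one_mul] using vecCont A B w 1
  -- the two submodules
  set Csub : Submodule ℝ (Fin n → ℝ) := LinearMap.range (ctrbMat A B).mulVecLin with hCsub
  set Gsub : Submodule ℝ (Fin n → ℝ) := LinearMap.range W.mulVecLin with hGsub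
  have hCset : { y : Fin n → ℝ | ∃ v : Fin n × Fin p → ℝ, (ctrbMat A B).mulVec v = y }
      = (Csub : Set (Fin n → ℝ)) := by
    ext y; simp [hCsub, LinearMap.mem_range, Matrix.mulVecLin_apply]
  have hGset : { y : Fin n → ℝ | ∃ w : Fin n → ℝ, W.mulVec w = y }
      = (Gsub : Set (Fin n → ℝ)) := by
    ext y; simp [hGsub, LinearMap.mem_range, Matrix.mulVecLin_apply]
  -- Pn → vanishing of w ᵥ* (exp(s•A) B) for all s
  have hPnQ : ∀ w : Fin n → ℝ, (∀ k : Fin n, w ᵥ* (A ^ (k : ℕ) * B) = 0) →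
      ∀ s : ℝ, w ᵥ* m s = 0 := by
    intro w hw
    have hall : ∀ M ∈ Submodule.span ℝ (Set.range fun k : Fin n => A ^ (k : ℕ)),
        w ᵥ* (M * B) = 0 := by
      intro M hM
      induction hM using Submodule.span_induction with
      | mem x hx => obtain ⟨k, rfl⟩ := hx; exact hw k
      | zero => simp
      | add x y _ _ hx hy => rw [Matrix.add_mul, Matrix.vecMul_add, hx, hy, add_zero]
      | smul c x _ hx => rw [Matrix.smul_mul, vecMul_smul_right, hx, smul_zero]
    intro s
    exact hall _ (exp_mem_span A s)
  -- vanishing on [0,t₁] → Pn (via derivatives)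
  have hQP : ∀ w : Fin n → ℝ, (∀ s ∈ Set.Icc (0:ℝ) t₁, w ᵥ* m s = 0) →
      ∀ k : ℕ, w ᵥ* (A ^ k * B) = 0 := by
    intro w hw
    have key : ∀ k : ℕ, ∀ s ∈ Set.Icc (0:ℝ) t₁,
        w ᵥ* (A ^ k * exp (s • A) * B) = 0 := by
      intro k
      induction k with
      | zero =>
          intro s hs
          have := hw s hs
          rw [hm] at this
          simpa [Matrix.one_mul] using this
      | succ k ih =>
          have hioo : ∀ s ∈ Set.Ioo (0:ℝ) t₁,
              w ᵥ* (A ^ (k + 1) * exp (s • A) * B) = 0 := by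
            intro s hs
            have hd := vecDeriv A B w (A ^ k) s
            have hzero : (fun u : ℝ => w ᵥ* (A ^ k * exp (u • A) * B))
                =ᶠ[nhds s] fun _ => (0 : Fin p → ℝ) := by
              filter_upwards [Ioo_mem_nhds hs.1 hs.2] with u hu
              exact ih u ⟨le_of_lt hu.1, le_of_lt hu.2⟩
            have hd0 : HasDerivAt (fun u : ℝ => w ᵥ* (A ^ k * exp (u • A) * B))
                (0 : Fin p → ℝ) s :=
              (hasDerivAt_const s (0 : Fin p → ℝ)).congr_of_eventuallyEq hzero
            have huniq := hd.unique hd0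
            calc w ᵥ* (A ^ (k + 1) * exp (s • A) * B)
                = w ᵥ* (A ^ k * (A * exp (s • A)) * B) := by
                  rw [← Matrix.mul_assoc, pow_succ]
              _ = 0 := huniq
          intro s hs
          have hclos : Set.EqOn (fun s : ℝ => w ᵥ* (A ^ (k + 1) * exp (s • A) * B))
              (fun _ => (0 : Fin p → ℝ)) (closure (Set.Ioo (0:ℝ) t₁)) :=
            Set.EqOn.closure (fun u hu => hioo u hu) (vecCont A B w (A ^ (k + 1)))
              continuous_const
          have : s ∈ closure (Set.Ioo (0:ℝ) t₁) := by
            rwa [closure_Ioo (ne_of_lt ht₁)]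
          exact hclos this
    intro k
    have := key k 0 ⟨le_refl 0, le_of_lt ht₁⟩
    simpa [exp_zero, Matrix.mul_one] using this
  -- symmetry of the Gramian
  have hWsymm : Wᵀ = W := by
    have hEsymm : ∀ s : ℝ, (E s)ᵀ = E s := by
      intro s
      rw [hE]
      simp only [Matrix.transpose_mul, Matrix.transpose_transpose, htr,
        Matrix.mul_assoc]
    ext i j
    show W j i = W i j
    rw [hWdef]
    show (∫ s in (0:ℝ)..t₁, (exp (s • A) * B * Bᵀ * exp (s • Aᵀ)) j i)
      = ∫ s in (0:ℝ)..t₁, (exp (s • A) * B * Bᵀ * exp (s • Aᵀ)) i j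
    refine intervalIntegral.integral_congr fun s _ => ?_
    have h1 := congrFun (congrFun (hEsymm s) i) j
    rw [hE] at h1
    simpa [Matrix.transpose_apply] using h1
  -- entries of W
  have hWentry : ∀ i j, W i j = ∫ s in (0:ℝ)..t₁, E s i j := by
    intro i j
    rw [hWdef, hE]; rfl
  have hEij : ∀ i j, Continuous fun s : ℝ => E s i j := fun i j => hECont.matrix_elem i j
  -- mulVec through the integral
  have hWmv : ∀ (w : Fin n → ℝ) (i : Fin n),
      W.mulVec w i = ∫ s in (0:ℝ)..t₁, ((E s).mulVec w) i := by
    intro w i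
    have : W.mulVec w i = ∑ j : Fin n, (∫ s in (0:ℝ)..t₁, E s i j) * w j := by
      simp [Matrix.mulVec, dotProduct, hWentry]
    rw [this]
    have h2 : ∀ j : Fin n, (∫ s in (0:ℝ)..t₁, E s i j) * w j
        = ∫ s in (0:ℝ)..t₁, E s i j * w j := fun j =>
      (intervalIntegral.integral_mul_const (w j) _).symm
    simp only [h2]
    rw [← intervalIntegral.integral_finset_sum]
    · refine intervalIntegral.integral_congr fun s _ => ?_
      simp [Matrix.mulVec, dotProduct]
    · intro j _
      exact ((hEij i j).mul continuous_const).intervalIntegrable _ _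
  -- dot product against the Gramian as an integral of squares
  have hVC : ∀ (w : Fin n → ℝ) (i : Fin n), Continuous fun s : ℝ => ((E s).mulVec w) i := by
    intro w i
    have : (fun s : ℝ => ((E s).mulVec w) i) = fun s => ∑ j, E s i j * w j := by
      funext s; simp [Matrix.mulVec, dotProduct]
    rw [this]
    exact continuous_finset_sum _ fun j _ => (hEij i j).mul continuous_const
  have hdotE : ∀ (w : Fin n → ℝ) (s : ℝ),
      w ⬝ᵥ (E s).mulVec w = (w ᵥ* m s) ⬝ᵥ (w ᵥ* m s) := by
    intro w s
    calc w ⬝ᵥ (E s).mulVec w = w ⬝ᵥ (m s).mulVec ((m s)ᵀ.mulVec w) := by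
          rw [hEm s, ← Matrix.mulVec_mulVec]
      _ = (w ᵥ* m s) ⬝ᵥ ((m s)ᵀ.mulVec w) := Matrix.dotProduct_mulVec _ _ _
      _ = (w ᵥ* m s) ⬝ᵥ (w ᵥ* m s) := by rw [Matrix.mulVec_transpose]
  have hdotW : ∀ w : Fin n → ℝ,
      w ⬝ᵥ W.mulVec w = ∫ s in (0:ℝ)..t₁, (w ᵥ* m s) ⬝ᵥ (w ᵥ* m s) := by
    intro w
    have h1 : w ⬝ᵥ W.mulVec w
        = ∑ i : Fin n, w i * (∫ s in (0:ℝ)..t₁, ((E s).mulVec w) i) := by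
      simp [dotProduct, hWmv]
    rw [h1]
    have h2 : ∀ i : Fin n, w i * (∫ s in (0:ℝ)..t₁, ((E s).mulVec w) i)
        = ∫ s in (0:ℝ)..t₁, w i * ((E s).mulVec w) i := fun i =>
      (intervalIntegral.integral_const_mul _ _).symm
    simp only [h2]
    rw [← intervalIntegral.integral_finset_sum (f := fun i s => w i * ((E s).mulVec w) i)
      (fun i _ => (continuous_const.mul (hVC w i)).intervalIntegrable _ _)]
    exact intervalIntegral.integral_congr fun s _ => hdotE w s
  -- zero integral of squares forces vanishing on [0, t₁]
  have hIntQI : ∀ w : Fin n → ℝ,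
      (∫ s in (0:ℝ)..t₁, (w ᵥ* m s) ⬝ᵥ (w ᵥ* m s)) = 0 →
      ∀ s ∈ Set.Icc (0:ℝ) t₁, w ᵥ* m s = 0 := by
    intro w h0
    have hcont : Continuous fun s : ℝ => (w ᵥ* m s) ⬝ᵥ (w ᵥ* m s) := by
      show Continuous fun s : ℝ => ∑ j, (w ᵥ* m s) j * (w ᵥ* m s) j
      exact continuous_finset_sum _ fun j _ =>
        (((continuous_apply j).comp (hcCont w)).mul ((continuous_apply j).comp (hcCont w)))
    have hnn : ∀ s : ℝ, 0 ≤ (w ᵥ* m s) ⬝ᵥ (w ᵥ* m s) := fun s =>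
      Finset.sum_nonneg fun j _ => mul_self_nonneg _
    have hzero := eqzero_of_integral ht₁ hcont hnn h0
    intro s hs
    have := hzero s hs
    funext j
    have hj : ∀ j ∈ Finset.univ, (w ᵥ* m s) j * (w ᵥ* m s) j = 0 :=
      (Finset.sum_eq_zero_iff_of_nonneg fun j _ => mul_self_nonneg _).1 this
    exact mul_self_eq_zero.1 (hj j (Finset.mem_univ j))
  -- QI forces W *ᵥ w = 0
  have hQIW : ∀ w : Fin n → ℝ, (∀ s ∈ Set.Icc (0:ℝ) t₁, w ᵥ* m s = 0) →
      W.mulVec w = 0 := by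
    intro w hw
    funext i
    rw [hWmv]
    have heq : Set.EqOn (fun s => ((E s).mulVec w) i) (fun _ => (0:ℝ))
        (Set.uIcc (0:ℝ) t₁) := by
      intro s hs
      rw [Set.uIcc_of_le (le_of_lt ht₁)] at hs
      have h0 := hw s hs
      have : (E s).mulVec w = 0 := by
        rw [hEm s, ← Matrix.mulVec_mulVec, Matrix.mulVec_transpose, h0, Matrix.mulVec_zero]
      simp [this]
    rw [intervalIntegral.integral_congr heq]
    simp
  -- orthogonality characterizations
  have hCorth : ∀ w : Fin n → ℝ, (∀ y ∈ Csub, w ⬝ᵥ y = 0) ↔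
      (∀ k : Fin n, w ᵥ* (A ^ (k : ℕ) * B) = 0) := by
    intro w
    constructor
    · intro h k
      funext j
      have hmem : (ctrbMat A B).mulVec (Pi.single (k, j) 1) ∈ Csub :=
        ⟨Pi.single (k, j) 1, by rw [Matrix.mulVecLin_apply]⟩
      have := h _ hmem
      rw [dotProduct_mulVec, dotProduct_single, mul_one] at this
      exact this
    · intro h y hy
      obtain ⟨v, rfl⟩ := hy
      rw [Matrix.mulVecLin_apply, dotProduct_mulVec]
      have hz : w ᵥ* ctrbMat A B = 0 := by
        funext kj
        obtain ⟨k, j⟩ := kj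
        show (w ᵥ* (A ^ (k : ℕ) * B)) j = 0
        rw [h k]; rfl
      rw [hz, zero_dotProduct]
  have hGorth : ∀ w : Fin n → ℝ, (∀ y ∈ Gsub, w ⬝ᵥ y = 0) ↔
      (∀ s ∈ Set.Icc (0:ℝ) t₁, w ᵥ* m s = 0) := by
    intro w
    constructor
    · intro h
      refine hIntQI w ?_
      rw [← hdotW]
      exact h _ ⟨w, by rw [Matrix.mulVecLin_apply]⟩
    · intro h y hy
      obtain ⟨z, rfl⟩ := hy
      rw [Matrix.mulVecLin_apply, dotProduct_mulVec]
      have hz : w ᵥ* W = 0 := by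
        rw [← Matrix.mulVec_transpose, hWsymm]
        exact hQIW w h
      rw [hz, zero_dotProduct]
  -- the submodules agree
  have hCG : Csub = Gsub := by
    ext x
    rw [mem_iff_dot Csub x, mem_iff_dot Gsub x]
    constructor
    · intro hx w hw
      have hQI := (hGorth w).1 hw
      have hPn : ∀ k : Fin n, w ᵥ* (A ^ (k : ℕ) * B) = 0 := fun k => hQP w hQI (k : ℕ)
      exact hx w ((hCorth w).2 hPn)
    · intro hx w hw
      have hPn := (hCorth w).1 hw
      have hQ := hPnQ w hPn
      exact hx w ((hGorth w).2 fun s _ => hQ s)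
  have hsecond : { y : Fin n → ℝ | ∃ v : Fin n × Fin p → ℝ, (ctrbMat A B).mulVec v = y }
      = { y : Fin n → ℝ | ∃ w : Fin n → ℝ, W.mulVec w = y } := by
    rw [hCset, hGset, hCG]
  refine ⟨?_, hsecond⟩
  -- first equality
  apply Set.Subset.antisymm
  · rintro x ⟨u, hu, rfl⟩
    rw [hCset]
    show (fun i => ∫ s in (0:ℝ)..t₁, (exp ((t₁ - s) • A) * B).mulVec (u s) i) ∈ Csub
    rw [mem_iff_dot]
    intro w hw
    have hQ := hPnQ w ((hCorth w).1 hw)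
    have hMC : ∀ i : Fin n, Continuous fun s : ℝ => ((m (t₁ - s)).mulVec (u s)) i := by
      intro i
      have : (fun s : ℝ => ((m (t₁ - s)).mulVec (u s)) i)
          = fun s => ∑ j, (m (t₁ - s)) i j * u s j := by
        funext s; simp [Matrix.mulVec, dotProduct]
      rw [this]
      refine continuous_finset_sum _ fun j _ => Continuous.mul ?_ ((continuous_apply j).comp hu)
      exact (hmCont.matrix_elem i j).comp (continuous_const.sub continuous_id)
    have h1 : w ⬝ᵥ (fun i => ∫ s in (0:ℝ)..t₁, (exp ((t₁ - s) • A) * B).mulVec (u s) i)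
        = ∑ i, w i * ∫ s in (0:ℝ)..t₁, ((m (t₁ - s)).mulVec (u s)) i := rfl
    rw [h1]
    have h2 : ∀ i : Fin n, (w i) * (∫ s in (0:ℝ)..t₁, ((m (t₁ - s)).mulVec (u s)) i)
        = ∫ s in (0:ℝ)..t₁, w i * ((m (t₁ - s)).mulVec (u s)) i := fun i =>
      (intervalIntegral.integral_const_mul _ _).symm
    simp only [h2]
    rw [← intervalIntegral.integral_finset_sum
      (f := fun i s => w i * ((m (t₁ - s)).mulVec (u s)) i)
      (fun i _ => (continuous_const.mul (hMC i)).intervalIntegrable _ _)]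
    have h3 : ∀ s : ℝ, (∑ i, w i * ((m (t₁ - s)).mulVec (u s)) i) = (0:ℝ) := by
      intro s
      have h4 : (∑ i, w i * ((m (t₁ - s)).mulVec (u s)) i)
          = w ⬝ᵥ (m (t₁ - s)).mulVec (u s) := rfl
      rw [h4, dotProduct_mulVec, hQ (t₁ - s), zero_dotProduct]
    rw [intervalIntegral.integral_congr fun s _ => h3 s]
    simp
  · intro y hy
    rw [hsecond] at hy
    obtain ⟨w0, rfl⟩ := hy
    refine ⟨fun s => w0 ᵥ* m (t₁ - s),
      (hcCont w0).comp (continuous_const.sub continuous_id), ?_⟩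
    funext i
    have h4 : ∀ s : ℝ, ((exp ((t₁ - s) • A) * B).mulVec (w0 ᵥ* m (t₁ - s))) i
        = ((E (t₁ - s)).mulVec w0) i := by
      intro s
      have h5 : (exp ((t₁ - s) • A) * B).mulVec (w0 ᵥ* m (t₁ - s))
          = (E (t₁ - s)).mulVec w0 := by
        have hv : w0 ᵥ* m (t₁ - s) = (m (t₁ - s))ᵀ.mulVec w0 :=
          (Matrix.mulVec_transpose _ _).symm
        rw [show exp ((t₁ - s) • A) * B = m (t₁ - s) from rfl, hv,
          Matrix.mulVec_mulVec, ← hEm]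
      rw [h5]
    calc (W *ᵥ w0) i = ∫ s in (0:ℝ)..t₁, ((E s).mulVec w0) i := hWmv w0 i
      _ = ∫ s in (0:ℝ)..t₁, ((E (t₁ - s)).mulVec w0) i := by
          have h6 := intervalIntegral.integral_comp_sub_left (a := (0:ℝ)) (b := t₁)
            (fun s => ((E s).mulVec w0) i) t₁
          rw [sub_self, sub_zero] at h6
          exact h6.symm
      _ = ∫ s in (0:ℝ)..t₁, ((exp ((t₁ - s) • A) * B).mulVec (w0 ᵥ* m (t₁ - s))) i :=
          intervalIntegral.integral_congr fun s _ => (h4 s).symm
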